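/- Let α > 0. Then ∑_{k=1}^∞ ∏_{i=0}^{k-1} α/(α + 1/(i+1)) equals Γ(1 + 1/α) ∑_{k=1}^∞ Γ(k+1)/Γ(k + 1 + 1/α); this sum equals α/(1-α) if α < 1 and diverges to infinity if α ≥ 1. -/

import Mathlib

open Finset Filter Real

lemma aux_prod_eq (α : ℝ) (hα : 0 < α) (k : ℕ) :
    ∏ i ∈ Finset.range (k + 1), α / (α + 1 / ((i : ℝ) + 1)) =
    ∏ i ∈ Finset.range (k + 1), ((i:ℝ) + 1) / ((i:ℝ) + 1 + 1/α) := by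
  refine Finset.prod_congr rfl fun i _ => ?_
  have h1 : (0:ℝ) < (i:ℝ) + 1 := by positivity
  have h2 : α ≠ 0 := ne_of_gt hα
  rw [div_eq_div_iff (by positivity) (by positivity)]
  field_simp

lemma aux_pos (α : ℝ) (hα : 0 < α) (k : ℕ) :
    0 < ∏ i ∈ Finset.range (k + 1), α / (α + 1 / ((i : ℝ) + 1)) :=
  Finset.prod_pos fun i _ => by positivity

lemma aux_gamma (α : ℝ) (hα : 0 < α) (k : ℕ) :
    ∏ i ∈ Finset.range (k + 1), α / (α + 1 / ((i : ℝ) + 1)) =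
    Real.Gamma (1 + 1/α) * (Real.Gamma ((k:ℝ) + 2) / Real.Gamma ((k:ℝ) + 2 + 1/α)) := by
  rw [aux_prod_eq α hα]
  induction k with
  | zero =>
    simp only [Nat.zero_add, Finset.prod_range_one, Nat.cast_zero]
    have h2 : Real.Gamma (0 + 2 : ℝ) = 1 := by norm_num [Real.Gamma_two]
    have h3 : Real.Gamma (0 + 2 + 1/α : ℝ) = (1 + 1/α) * Real.Gamma (1 + 1/α) := by
      have := Real.Gamma_add_one (s := 1 + 1/α) (by positivity)
      rw [show (0:ℝ) + 2 + 1/α = (1 + 1/α) + 1 by ring, this]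
    rw [h2, h3]
    have hg : 0 < Real.Gamma (1 + 1/α) := Real.Gamma_pos_of_pos (by positivity)
    field_simp
    ring
  | succ n ih =>
    rw [Finset.prod_range_succ, ih]
    push_cast
    have e1 : Real.Gamma ((n:ℝ) + 1 + 2) = ((n:ℝ) + 2) * Real.Gamma ((n:ℝ) + 2) := by
      rw [show (n:ℝ) + 1 + 2 = ((n:ℝ) + 2) + 1 by ring,
        Real.Gamma_add_one (by positivity)]
    have e2 : Real.Gamma ((n:ℝ) + 1 + 2 + 1/α) =
        ((n:ℝ) + 2 + 1/α) * Real.Gamma ((n:ℝ) + 2 + 1/α) := by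
      rw [show (n:ℝ) + 1 + 2 + 1/α = ((n:ℝ) + 2 + 1/α) + 1 by ring,
        Real.Gamma_add_one (by positivity)]
    rw [e1, e2]
    have hg1 : 0 < Real.Gamma ((n:ℝ) + 2 + 1/α) := Real.Gamma_pos_of_pos (by positivity)
    have h4 : (0:ℝ) < (n:ℝ) + 2 + 1/α := by positivity
    field_simp
    ring

lemma aux_part2 (α : ℝ) (hα : 0 < α) (h1 : α < 1) :
    HasSum (fun k : ℕ => ∏ i ∈ Finset.range (k + 1), α / (α + 1 / ((i : ℝ) + 1)))
      (α / (1 - α)) := by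
  have hα' : α ≠ 0 := ne_of_gt hα
  set β : ℝ := 1/α with hβdef
  have hβpos : 0 < β := by positivity
  have hβ : 1 < β := by
    rw [hβdef, lt_div_iff₀ hα]; linarith
  set a : ℕ → ℝ := fun k => ∏ i ∈ Finset.range (k + 1), ((i:ℝ)+1)/((i:ℝ)+1+β) with ha_def
  have ha_eq : ∀ k, (∏ i ∈ Finset.range (k + 1), α / (α + 1 / ((i : ℝ) + 1))) = a k :=
    aux_prod_eq α hα
  have hapos : ∀ k, 0 < a k := fun k => Finset.prod_pos fun i _ => by positivity
  set b : ℕ → ℝ := fun n => ((n:ℝ) + β + 1)/(β - 1) * a n with hb_def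
  have hbpos : ∀ n, 0 < b n := fun n => by
    have h := hapos n
    have h2 : (0:ℝ) < β - 1 := by linarith
    have h3 : (0:ℝ) < (n:ℝ) + β + 1 := by positivity
    exact mul_pos (div_pos h3 h2) h
  have hrec : ∀ n, b (n+1) = b n - a n := by
    intro n
    have hstep : a (n+1) = a n * (((n:ℝ)+2)/((n:ℝ)+2+β)) := by
      simp only [ha_def, Finset.prod_range_succ]
      push_cast
      ring
    rw [hb_def]
    simp only []
    rw [hstep]
    have d1 : (β:ℝ) - 1 ≠ 0 := by linarith
    have d2 : (n:ℝ) + 2 + β ≠ 0 := by positivity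
    push_cast
    field_simp
    ring
  have hsum : ∀ n, ∑ k ∈ Finset.range n, a k = b 0 - b n := by
    intro n; induction n with
    | zero => simp
    | succ m ih => rw [Finset.sum_range_succ, ih, hrec]; ring
  have hanti : Antitone b := antitone_nat_of_succ_le fun n => by
    rw [hrec]; linarith [hapos n]
  have hbdd : BddBelow (Set.range b) := ⟨0, fun x ⟨n, hn⟩ => hn ▸ (hbpos n).le⟩
  set L : ℝ := ⨅ n, b n with hL_def
  have hbL : Filter.Tendsto b Filter.atTop (nhds L) := tendsto_atTop_ciInf hanti hbdd
  have hL0 : 0 ≤ L := le_ciInf fun n => (hbpos n).le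
  have hLle : ∀ n, L ≤ b n := fun n => ciInf_le hbdd n
  have hS : Filter.Tendsto (fun n => ∑ k ∈ Finset.range n, a k) Filter.atTop (nhds (b 0 - L)) := by
    simp only [hsum]
    exact tendsto_const_nhds.sub hbL
  have hHasSum : HasSum a (b 0 - L) :=
    (hasSum_iff_tendsto_nat_of_nonneg (fun k => (hapos k).le) _).2 hS
  have hLzero : L = 0 := by
    by_contra hne
    have hLpos : 0 < L := lt_of_le_of_ne hL0 (Ne.symm hne)
    have hlow : ∀ n : ℕ, (β-1)*L/(β+1) * (1/((n:ℝ)+1)) ≤ a n := by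
      intro n
      have h2 : (0:ℝ) < β - 1 := by linarith
      have h3 : (0:ℝ) < (n:ℝ) + β + 1 := by positivity
      have h4 : a n = (β-1)/((n:ℝ)+β+1) * b n := by
        rw [hb_def]
        field_simp
      rw [h4]
      have h5 : (β-1)/((n:ℝ)+β+1) * L ≤ (β-1)/((n:ℝ)+β+1) * b n :=
        mul_le_mul_of_nonneg_left (hLle n) (by positivity)
      calc (β-1)*L/(β+1) * (1/((n:ℝ)+1)) = (β-1)*L*1/((β+1)*((n:ℝ)+1)) := by rw [div_mul_div_comm]
        _ ≤ (β-1)*L*1/((n:ℝ)+β+1) := by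
            have h2' : (0:ℝ) < β - 1 := by linarith
            gcongr
            nlinarith [Nat.cast_nonneg (α := ℝ) n]
        _ = (β-1)*L/((n:ℝ)+β+1) := by rw [mul_one]
        _ = (β-1)/((n:ℝ)+β+1) * L := by ring
        _ ≤ (β-1)/((n:ℝ)+β+1) * b n := h5
    have hsummlow : Summable (fun n : ℕ => (β-1)*L/(β+1) * (1/((n:ℝ)+1))) :=
      Summable.of_nonneg_of_le
        (fun n => by
          have h2' : (0:ℝ) < β - 1 := by linarith
          positivity) hlow hHasSum.summable
    have hc : (β-1)*L/(β+1) ≠ 0 := by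
      have h2' : (0:ℝ) < β - 1 := by linarith
      positivity
    have hs1 : Summable (fun n : ℕ => 1/((n:ℝ)+1)) := (summable_mul_left_iff hc).mp hsummlow
    have hs0 : Summable (fun n : ℕ => 1/((n:ℝ))) := by
      rw [← summable_nat_add_iff 1]
      convert hs1 using 2 with n
      · rfl
      push_cast; ring
    exact Real.not_summable_one_div_natCast hs0
  have hval : b 0 - L = α / (1 - α) := by
    rw [hLzero, sub_zero, hb_def]
    simp only [Nat.cast_zero, ha_def, Nat.zero_add, Finset.prod_range_one]
    rw [hβdef]
    have : (1:ℝ) - α ≠ 0 := by linarith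
    field_simp
    ring
  rw [← hval]
  have hfe : (fun k : ℕ => ∏ i ∈ Finset.range (k+1), α/(α+1/((i:ℝ)+1))) = a := funext ha_eq
  rw [hfe]
  exact hHasSum

lemma aux_tele (k : ℕ) :
    ∏ i ∈ Finset.range (k + 1), ((i:ℝ)+1)/((i:ℝ)+2) = 1/((k:ℝ)+2) := by
  induction k with
  | zero => norm_num
  | succ n ih =>
    rw [Finset.prod_range_succ, ih]
    push_cast
    rw [div_mul_div_comm, one_mul]
    rw [div_eq_div_iff (by positivity) (by positivity)]
    ring

lemma aux_part3 (α : ℝ) (hα : 0 < α) (h1 : 1 ≤ α) :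
    Filter.Tendsto
      (fun n : ℕ => ∑ k ∈ Finset.range n,
        ∏ i ∈ Finset.range (k + 1), α / (α + 1 / ((i : ℝ) + 1)))
      Filter.atTop Filter.atTop := by
  have hlow : ∀ k : ℕ, 1/((k:ℝ)+2) ≤ ∏ i ∈ Finset.range (k+1), α/(α+1/((i:ℝ)+1)) := by
    intro k
    rw [← aux_tele k]
    refine Finset.prod_le_prod (fun i _ => by positivity) (fun i _ => ?_)
    have hi : (0:ℝ) < (i:ℝ) + 1 := by positivity
    rw [div_le_div_iff₀ (by positivity) (by positivity)]
    have key : ((i:ℝ)+1) * (α + 1/((i:ℝ)+1)) = α*((i:ℝ)+1) + 1 := by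
      field_simp
    rw [key]
    nlinarith [Nat.cast_nonneg (α := ℝ) i]
  have hdiv : Filter.Tendsto (fun n : ℕ => ∑ k ∈ Finset.range n, 1/((k:ℝ)+2))
      Filter.atTop Filter.atTop := by
    rw [← not_summable_iff_tendsto_nat_atTop_of_nonneg (fun n => by positivity)]
    intro hs
    have hs0 : Summable (fun n : ℕ => 1/((n:ℝ))) := by
      rw [← summable_nat_add_iff 2]
      convert hs using 2 with n
      · rfl
      push_cast; ring
    exact Real.not_summable_one_div_natCast hs0
  exact Filter.tendsto_atTop_mono
    (fun n => Finset.sum_le_sum fun k _ => hlow k) hdiv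

theorem stmt_14 (α : ℝ) (hα : 0 < α) :
    ((∑' k : ℕ, ∏ i ∈ Finset.range (k + 1), α / (α + 1 / ((i : ℝ) + 1))) =
      Real.Gamma (1 + 1 / α) *
        ∑' k : ℕ, Real.Gamma ((k : ℝ) + 2) / Real.Gamma ((k : ℝ) + 2 + 1 / α)) ∧
    (α < 1 → HasSum (fun k : ℕ => ∏ i ∈ Finset.range (k + 1), α / (α + 1 / ((i : ℝ) + 1)))
      (α / (1 - α))) ∧
    (1 ≤ α → Filter.Tendsto
      (fun n : ℕ => ∑ k ∈ Finset.range n,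
        ∏ i ∈ Finset.range (k + 1), α / (α + 1 / ((i : ℝ) + 1)))
      Filter.atTop Filter.atTop) := by
  refine ⟨?_, fun h => aux_part2 α hα h, fun h => aux_part3 α hα h⟩
  rw [tsum_congr (fun k => aux_gamma α hα k), tsum_mul_left]
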